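/- Let A be a commutative ring, M an A-module, and τ : M → M an A-linear automorphism such that the A-subalgebra B of End_A(M) generated by τ and τ^{-1} is finitely generated as an A-module. Then τ satisfies a Laurent polynomial relation c₀ + c₁τ + ⋯ + c_{d-1}τ^{d-1} + τ^d = 0 combined with a relation for τ^{-1}, yielding a monic polynomial relation for τ whose constant coefficient is a unit of A; equivalently, there exist d ≥ 1 and a₀,…,a_{d-1} ∈ A with a₀ ∈ A^× such that τ^d = a_{d-1}τ^{d-1} + ⋯ + a₁τ + a₀. -/
import Mathlib
set_option synthInstance.maxHeartbeats 1000000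
set_option maxHeartbeats 1000000

/-- if the subalgebra of `End_A(M)` generated by an automorphism `τ` and
its inverse is module-finite over `A`, then `τ` satisfies a monic polynomial relation
whose constant coefficient is a unit. -/
theorem stmt3 (A : Type*) [CommRing A] (M : Type*) [AddCommGroup M] [Module A M]
    (τ : M ≃ₗ[A] M)
    (hB : Module.Finite A
      (Algebra.adjoin A ({τ.toLinearMap, τ.symm.toLinearMap} : Set (Module.End A M)))) :
    ∃ d : ℕ, 1 ≤ d ∧ ∃ a : ℕ → A, IsUnit (a 0) ∧
      (τ.toLinearMap : Module.End A M) ^ d =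
        ∑ i ∈ Finset.range d, a i • (τ.toLinearMap : Module.End A M) ^ i := by
  classical
  rcases subsingleton_or_nontrivial A with hA | hA
  · haveI : Subsingleton (Module.End A M) := by
      haveI := Module.subsingleton A M
      infer_instance
    exact ⟨1, le_refl 1, fun _ => 0, isUnit_of_subsingleton 0, Subsingleton.elim _ _⟩
  set T : Module.End A M := τ.toLinearMap with hT
  set S : Module.End A M := τ.symm.toLinearMap with hS
  have hTS : T * S = 1 := by ext m; simp [hT, hS, Module.End.mul_apply]
  have hST : S * T = 1 := by ext m; simp [hT, hS, Module.End.mul_apply]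
  letI : Invertible S := ⟨T, hTS, hST⟩
  have hfg : (Subalgebra.toSubmodule
      (Algebra.adjoin A ({T, S} : Set (Module.End A M)))).FG :=
    Module.Finite.iff_fg.mp hB
  have hTint : IsIntegral A T :=
    IsIntegral.of_mem_of_fg _ hfg _ (Algebra.subset_adjoin (by simp))
  have hSint : IsIntegral A S :=
    IsIntegral.of_mem_of_fg _ hfg _ (Algebra.subset_adjoin (by simp))
  obtain ⟨f, hfm, hf0⟩ := hTint
  obtain ⟨g, hgm, hg0⟩ := hSint
  have hcomm : Commute T S := by
    rw [Commute, SemiconjBy, hTS, hST]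
  have hpow : ∀ n : ℕ, T ^ n * S ^ n = 1 := by
    intro n
    rw [← hcomm.mul_pow, hTS, one_pow]
  have hpow' : ∀ n : ℕ, S ^ n * T ^ n = 1 := by
    intro n
    rw [← hcomm.symm.mul_pow, hST, one_pow]
  have hg0' : Polynomial.aeval S g = 0 := hg0
  have hrev : Polynomial.aeval T g.reverse = 0 := by
    have key : ∀ n : ℕ, n ≤ g.natDegree → T ^ n * S ^ g.natDegree = S ^ (g.natDegree - n) := by
      intro n hn
      have : S ^ g.natDegree = S ^ n * S ^ (g.natDegree - n) := by
        rw [← pow_add, Nat.add_sub_cancel' hn]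
      rw [this, ← mul_assoc, hpow n, one_mul]
    have h1 : Polynomial.aeval T g.reverse * S ^ g.natDegree = Polynomial.aeval S g := by
      rw [Polynomial.aeval_eq_sum_range' (n := g.natDegree + 1)
        (Nat.lt_succ_of_le g.reverse_natDegree_le),
        Polynomial.aeval_eq_sum_range' (n := g.natDegree + 1) (Nat.lt_succ_self _),
        Finset.sum_mul]
      rw [show ∑ i ∈ Finset.range (g.natDegree + 1), g.coeff i • S ^ i
          = ∑ i ∈ Finset.range (g.natDegree + 1),
              g.coeff (g.natDegree - i) • S ^ (g.natDegree - i) from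
        (Finset.sum_range_reflect (fun i => g.coeff i • S ^ i) (g.natDegree + 1)).symm]
      refine Finset.sum_congr rfl fun n hn => ?_
      have hn' : n ≤ g.natDegree := Nat.lt_succ_iff.mp (Finset.mem_range.mp hn)
      rw [smul_mul_assoc, key n hn', Polynomial.coeff_reverse,
        Polynomial.revAt_le hn']
    have h2 : Polynomial.aeval T g.reverse
        = Polynomial.aeval T g.reverse * S ^ g.natDegree * T ^ g.natDegree := by
      rw [mul_assoc, hpow', mul_one]
    rw [h2, h1, hg0', zero_mul]
  set e : ℕ := g.natDegree with he
  set f' : Polynomial A := Polynomial.X * f with hf'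
  have hf'm : f'.Monic := Polynomial.monic_X.mul hfm
  have hf'0 : Polynomial.aeval T f' = 0 := by
    rw [hf', map_mul, Polynomial.aeval_X, Polynomial.aeval_def, hf0, mul_zero]
  set q : Polynomial A := Polynomial.X ^ (e + 1) * f' with hq
  have hqm : q.Monic := (Polynomial.monic_X_pow (e + 1)).mul hf'm
  have hqdeg : q.natDegree = e + 1 + f'.natDegree := by
    rw [hq, (Polynomial.monic_X_pow (e + 1)).natDegree_mul hf'm,
      Polynomial.natDegree_X_pow]
  have hdeglt : g.reverse.degree < q.degree := by
    have h1 : g.reverse.degree ≤ (e : WithBot ℕ) :=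
      le_trans Polynomial.degree_le_natDegree (by exact_mod_cast g.reverse_natDegree_le)
    have h2 : q.degree = ((e + 1 + f'.natDegree : ℕ) : WithBot ℕ) := by
      rw [Polynomial.degree_eq_natDegree hqm.ne_zero, hqdeg]
    rw [h2]
    refine lt_of_le_of_lt h1 ?_
    exact_mod_cast Nat.lt_of_lt_of_le (Nat.lt_succ_self e) (Nat.le_add_right _ _)
  set P : Polynomial A := q + g.reverse with hP
  have hPm : P.Monic := hqm.add_of_left hdeglt
  have hPdeg : P.natDegree = e + 1 + f'.natDegree := by
    rw [hP, Polynomial.natDegree_add_eq_left_of_degree_lt hdeglt, hqdeg]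
  have hP0 : P.coeff 0 = 1 := by
    rw [hP, Polynomial.coeff_add, hq, Polynomial.mul_coeff_zero,
      Polynomial.coeff_X_pow, Polynomial.coeff_zero_reverse, hgm.leadingCoeff]
    simp
  have hPT : Polynomial.aeval T P = 0 := by
    rw [hP, map_add, hrev, hq, map_mul, hf'0]
    simp
  set D : ℕ := P.natDegree with hD
  have hD1 : 1 ≤ D := by omega
  refine ⟨D, hD1, fun i => -(P.coeff i), by simp only []; rw [hP0]; exact isUnit_one.neg, ?_⟩
  have hsum := Polynomial.aeval_eq_sum_range (R := A) (x := T) (p := P)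
  rw [hPT] at hsum
  rw [Finset.sum_range_succ, hPm.coeff_natDegree, one_smul] at hsum
  have : T ^ D = -∑ i ∈ Finset.range D, P.coeff i • T ^ i := by
    rw [eq_neg_iff_add_eq_zero, add_comm]
    exact hsum.symm
  rw [this, ← Finset.sum_neg_distrib]
  exact Finset.sum_congr rfl fun i _ => (neg_smul _ _).symm
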